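/- Let α_1 < α_2 < ⋯ < α_m be distinct positive reals and n_1 < n_2 < ⋯ < n_m distinct natural numbers. Then the m×m generalized Vandermonde matrix with entries A_{jk} = α_k^{n_j} is invertible. -/

import Mathlib

open Finset Set

lemma exp_sum_coeffs_zero :
    ∀ (m : ℕ) (c : Fin m → ℝ) (n : Fin m → ℕ), StrictMono n →
      ∀ (r : Fin m → ℝ), StrictMono r → (∀ j, 0 < r j) →
      (∀ j, ∑ i, c i * r j ^ n i = 0) → ∀ i, c i = 0 := by
  intro m
  induction m with
  | zero => intro c n _ r _ _ _ i; exact absurd i.2 (by omega)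
  | succ m ih =>
    intro c n hn r hr hrpos hroot
    -- g x = ∑ i, c i * x ^ (n i - n 0)
    set g : ℝ → ℝ := fun x => ∑ i, c i * x ^ (n i - n 0) with hg
    have hfact : ∀ x : ℝ, 0 < x → (∑ i, c i * x ^ n i) = x ^ n 0 * g x := by
      intro x hx
      rw [hg, Finset.mul_sum]
      refine Finset.sum_congr rfl fun i _ => ?_
      have h0 : n 0 ≤ n i := hn.monotone (Fin.zero_le i)
      rw [← mul_assoc, mul_comm (x ^ n 0) (c i), mul_assoc, ← pow_add,
        Nat.add_sub_cancel' h0]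
    have hgroot : ∀ j, g (r j) = 0 := by
      intro j
      have := hroot j
      rw [hfact (r j) (hrpos j)] at this
      have hne : (r j) ^ n 0 ≠ 0 := pow_ne_zero _ (ne_of_gt (hrpos j))
      exact (mul_eq_zero.mp this).resolve_left hne
    -- derivative
    set g' : ℝ → ℝ := fun x =>
      ∑ i : Fin (m + 1), c i * (((n i - n 0 : ℕ) : ℝ) * x ^ (n i - n 0 - 1)) with hg'
    have hderiv : ∀ x : ℝ, HasDerivAt g (g' x) x := by
      intro x
      rw [hg, hg']
      exact HasDerivAt.fun_sum fun i _ => (hasDerivAt_pow (n i - n 0) x).const_mul (c i)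
    -- Rolle between consecutive roots
    have hR : ∀ j : Fin m, ∃ x ∈ Set.Ioo (r j.castSucc) (r j.succ), g' x = 0 := by
      intro j
      refine exists_hasDerivAt_eq_zero (hr (show j.castSucc < j.succ from Fin.castSucc_lt_succ)) ?_
        ((hgroot j.castSucc).trans (hgroot j.succ).symm)
        (fun x _ => hderiv x)
      exact Continuous.continuousOn (by
        rw [hg]; exact continuous_finset_sum _ fun i _ => continuous_const.mul (continuous_pow _))
    choose ρ hρ hρ0 using hR
    have hρpos : ∀ j, 0 < ρ j := fun j => lt_trans (hrpos j.castSucc) (hρ j).1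
    have hρmono : StrictMono ρ := by
      intro i i' hii
      have h1 : (ρ i) < r i.succ := (hρ i).2
      have h2 : r i'.castSucc < ρ i' := (hρ i').1
      have h3 : r i.succ ≤ r i'.castSucc := by
        apply hr.monotone
        rw [Fin.le_def]
        simp only [Fin.val_succ, Fin.coe_castSucc]
        omega
      linarith
    -- new coefficients / exponents
    set c' : Fin m → ℝ := fun i => c i.succ * ((n i.succ - n 0 : ℕ) : ℝ) with hc'
    set n' : Fin m → ℕ := fun i => n i.succ - n 0 - 1 with hn'
    have hn0lt : ∀ i : Fin m, n 0 < n i.succ := fun i => hn (Fin.succ_pos i)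
    have hn'mono : StrictMono n' := by
      intro i i' hii
      have := hn (show i.succ < i'.succ by rwa [Fin.succ_lt_succ_iff])
      have h1 := hn0lt i
      show n i.succ - n 0 - 1 < n i'.succ - n 0 - 1
      omega
    have hg'eq : ∀ x : ℝ, g' x = ∑ i : Fin m, c' i * x ^ n' i := by
      intro x
      show (∑ i : Fin (m + 1), c i * (((n i - n 0 : ℕ) : ℝ) * x ^ (n i - n 0 - 1)))
        = ∑ i : Fin m, c' i * x ^ n' i
      rw [Fin.sum_univ_succ]
      have : ((n 0 - n 0 : ℕ) : ℝ) = 0 := by norm_num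
      rw [this]
      simp only [mul_zero, zero_mul, zero_add]
      refine Finset.sum_congr rfl fun i _ => ?_
      show c i.succ * (((n i.succ - n 0 : ℕ) : ℝ) * x ^ (n i.succ - n 0 - 1))
        = (c i.succ * ((n i.succ - n 0 : ℕ) : ℝ)) * x ^ (n i.succ - n 0 - 1)
      ring
    have htail : ∀ i : Fin m, c' i = 0 := by
      refine ih c' n' hn'mono ρ hρmono hρpos fun j => ?_
      rw [← hg'eq]
      exact hρ0 j
    have hcsucc : ∀ i : Fin m, c i.succ = 0 := by
      intro i
      have h : c i.succ * ((n i.succ - n 0 : ℕ) : ℝ) = 0 := htail i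
      have : ((n i.succ - n 0 : ℕ) : ℝ) ≠ 0 := by
        have := hn0lt i
        exact_mod_cast Nat.sub_ne_zero_of_lt this
      exact (mul_eq_zero.mp h).resolve_right this
    have hc0 : c 0 = 0 := by
      have h := hroot 0
      rw [Fin.sum_univ_succ] at h
      have hz : ∑ i : Fin m, c i.succ * r 0 ^ n i.succ = 0 :=
        Finset.sum_eq_zero fun i _ => by rw [hcsucc i, zero_mul]
      rw [hz, add_zero] at h
      have hne : (r 0 : ℝ) ^ n 0 ≠ 0 := pow_ne_zero _ (ne_of_gt (hrpos 0))
      exact (mul_eq_zero.mp h).resolve_right hne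
    intro i
    refine Fin.cases hc0 hcsucc i

theorem generalized_vandermonde_invertible
    (m : ℕ) (α : Fin m → ℝ) (hαpos : ∀ k, 0 < α k) (hα : StrictMono α)
    (n : Fin m → ℕ) (hn : StrictMono n) :
    IsUnit (Matrix.of fun j k : Fin m => α k ^ n j).det := by
  rw [isUnit_iff_ne_zero]
  intro hdet
  obtain ⟨v, hv, hv0⟩ := (Matrix.exists_vecMul_eq_zero_iff).mpr hdet
  apply hv
  funext k
  refine exp_sum_coeffs_zero m v n hn α hα hαpos (fun j => ?_) k
  have := congrFun hv0 j
  simpa [Matrix.vecMul, dotProduct] using this
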